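/- For all natural numbers k ≥ 2 and real numbers R > 0, 0 ≤ x < R, ∫_{-1}^{1} (1-s²)^{(2k-3)/2} / (R² + x² + 2Rxs)^{2(k-1)} ds ≥ (√π · Γ(k-1/2)/Γ(k)) · R^{-(4k-4)}, with equality if and only if x = 0. -/

import Mathlib

open Real intervalIntegral
open Set

open MeasureTheory Set Function in
private lemma my_swap {f : ℝ → ℝ → ℝ} {a b c d : ℝ} (hab : a ≤ b) (hcd : c ≤ d)
    (hf : ContinuousOn (fun p : ℝ × ℝ => f p.1 p.2) (Icc a b ×ˢ Icc c d)) :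
    (∫ t in a..b, ∫ s in c..d, f t s) = ∫ s in c..d, ∫ t in a..b, f t s := by
  have huc : Function.uncurry f = fun p : ℝ × ℝ => f p.1 p.2 := rfl
  rw [← huc] at hf
  have hI : Integrable (Function.uncurry f)
      ((volume.restrict (Ioc a b)).prod (volume.restrict (Ioc c d))) := by
    rw [Measure.prod_restrict]
    exact (hf.integrableOn_compact (isCompact_Icc.prod isCompact_Icc)).mono_set
      (Set.prod_mono Ioc_subset_Icc_self Ioc_subset_Icc_self)
  have hsw := MeasureTheory.integral_integral_swap hI
  rw [intervalIntegral.integral_of_le hab, intervalIntegral.integral_of_le hcd]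
  calc ∫ t in Ioc a b, (∫ s in c..d, f t s) ∂volume
      = ∫ t in Ioc a b, (∫ s in Ioc c d, f t s ∂volume) ∂volume := by
        refine integral_congr_ae (Filter.Eventually.of_forall fun t => ?_)
        simp only []; rw [intervalIntegral.integral_of_le hcd]
    _ = ∫ s in Ioc c d, (∫ t in Ioc a b, f t s ∂volume) ∂volume := hsw
    _ = ∫ s in Ioc c d, (∫ t in a..b, f t s) ∂volume := by
        refine integral_congr_ae (Filter.Eventually.of_forall fun s => ?_)
        simp only []; rw [intervalIntegral.integral_of_le hab]

open MeasureTheory Set Function in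
private lemma my_inner_integrable {f : ℝ → ℝ → ℝ} {a b c d : ℝ} (hab : a ≤ b) (hcd : c ≤ d)
    (hf : ContinuousOn (fun p : ℝ × ℝ => f p.1 p.2) (Icc a b ×ˢ Icc c d)) :
    IntervalIntegrable (fun t => ∫ s in c..d, f t s) volume a b := by
  have huc : Function.uncurry f = fun p : ℝ × ℝ => f p.1 p.2 := rfl
  rw [← huc] at hf
  have hI : Integrable (Function.uncurry f)
      ((volume.restrict (Ioc a b)).prod (volume.restrict (Ioc c d))) := by
    rw [Measure.prod_restrict]
    exact (hf.integrableOn_compact (isCompact_Icc.prod isCompact_Icc)).mono_set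
      (Set.prod_mono Ioc_subset_Icc_self Ioc_subset_Icc_self)
  have h2 := hI.integral_prod_left
  rw [intervalIntegrable_iff_integrableOn_Ioc_of_le hab]
  have he : (fun t => ∫ s in c..d, f t s) = fun t => ∫ s in Ioc c d, f t s ∂volume := by
    funext t; rw [intervalIntegral.integral_of_le hcd]
  rw [he]
  exact h2

private lemma hasDerivAt_q (R s t0 : ℝ) :
    HasDerivAt (fun t : ℝ => R^2 + t^2 + 2*R*t*s) (2*t0 + 2*R*s) t0 := by
  have h3 : HasDerivAt (fun t : ℝ => 2*R*t*s) (2*R*s) t0 := by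
    simpa using ((hasDerivAt_id t0).const_mul (2*R)).mul_const s
  have h2 : HasDerivAt (fun t : ℝ => R^2 + t^2) (2*t0) t0 := by
    simpa using (hasDerivAt_pow 2 t0).const_add (R^2)
  exact h2.add h3

private lemma hasDerivAt_psi (n : ℕ) (R s t0 c : ℝ) (hq : 0 < R^2 + t0^2 + 2*R*t0*s) :
    HasDerivAt (fun t : ℝ => c / (R^2 + t^2 + 2*R*t*s)^(n+2))
      (c * (-((n:ℝ)+2) * (2*t0 + 2*R*s)) / (R^2 + t0^2 + 2*R*t0*s)^(n+3)) t0 := by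
  have hpow := (hasDerivAt_q R s t0).pow (n+2)
  have hne : (R^2 + t0^2 + 2*R*t0*s)^(n+2) ≠ 0 := by positivity
  have h := (hasDerivAt_const t0 c).div hpow hne
  refine h.congr_deriv ?_
  symm
  simp only [Pi.pow_apply]
  rw [div_eq_div_iff (by positivity) (by positivity)]
  push_cast
  ring


private lemma hasDerivAt_cert (n : ℕ) (R s t0 c : ℝ) (hq : 0 < R^2 + t0^2 + 2*R*t0*s) :
    HasDerivAt (fun t : ℝ => t^(n+3) * (c * (-((n:ℝ)+2) * (2*t + 2*R*s)) / (R^2 + t^2 + 2*R*t*s)^(n+3)))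
      (2*((n:ℝ)+2)^2 * t0^(n+3) * c / (R^2 + t0^2 + 2*R*t0*s)^(n+3)
        + 2*((n:ℝ)+2)*R*t0^(n+2) *
          ((-((n:ℝ)+3)) * s * c / (R^2 + t0^2 + 2*R*t0*s)^(n+3)
            + (1-s^2) * c * (-2*((n:ℝ)+3)*R*t0) / (R^2 + t0^2 + 2*R*t0*s)^(n+4))) t0 := by
  have h1 : HasDerivAt (fun t : ℝ => t^(n+3)) (((n:ℝ)+3)*t0^(n+2)) t0 := by
    have h := hasDerivAt_pow (n+3) t0
    push_cast [Nat.add_sub_cancel] at h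
    convert h using 1
  have hlin : HasDerivAt (fun t : ℝ => 2*t + 2*R*s) 2 t0 := by
    simpa using ((hasDerivAt_id t0).const_mul 2).add_const (2*R*s)
  have hu : HasDerivAt (fun t : ℝ => c * (-((n:ℝ)+2) * (2*t + 2*R*s)))
      (c * (-((n:ℝ)+2) * 2)) t0 := by
    exact ((hlin.const_mul (-((n:ℝ)+2))).const_mul c)
  have hv := (hasDerivAt_q R s t0).pow (n+3)
  norm_num at hv
  have hne : (R^2 + t0^2 + 2*R*t0*s)^(n+3) ≠ 0 := by positivity
  have hdiv := hu.div hv hne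
  have h := h1.mul hdiv
  refine h.congr_deriv ?_
  symm
  have hqne : (R^2 + t0^2 + 2*R*t0*s) ≠ 0 := hq.ne'
  simp only [Pi.pow_apply, Pi.div_apply]
  field_simp
  push_cast
  ring

private lemma rpow_split (a e : ℝ) (ha : 0 ≤ a) (he : 0 < e) :
    a ^ (e + 1) = a * a ^ e := by
  rcases eq_or_lt_of_le ha with h | h
  · rw [← h, Real.zero_rpow (by positivity), Real.zero_rpow he.ne', mul_zero]
  · rw [Real.rpow_add h, Real.rpow_one]; ring

private lemma hasDerivAt_qs (R t τs : ℝ) (s0 : ℝ) :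
    HasDerivAt (fun s : ℝ => R^2 + t^2 + 2*R*t*s) (2*R*t) s0 := by
  simpa using ((hasDerivAt_id s0).const_mul (2*R*t)).const_add (R^2+t^2) |>.congr_deriv rfl

-- derivative of V(s) = (1-s^2)^((n+3)/2) / q^(n+3) in s
private lemma hasDerivAt_V (n : ℕ) (R t s0 : ℝ) (hs : s0 ∈ Set.Icc (-1:ℝ) 1)
    (hq : 0 < R^2 + t^2 + 2*R*t*s0) :
    HasDerivAt (fun s : ℝ => (1-s^2) ^ (((n:ℝ)+3)/2) / (R^2 + t^2 + 2*R*t*s)^(n+3))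
      ((-((n:ℝ)+3)) * s0 * (1-s0^2) ^ (((n:ℝ)+1)/2) / (R^2 + t^2 + 2*R*t*s0)^(n+3)
        + (1-s0^2) * (1-s0^2) ^ (((n:ℝ)+1)/2) * (-2*((n:ℝ)+3)*R*t) / (R^2 + t^2 + 2*R*t*s0)^(n+4)) s0 := by
  have hinner : HasDerivAt (fun s : ℝ => 1 - s^2) (-(2*s0)) s0 := by
    simpa using (hasDerivAt_pow 2 s0).const_sub 1
  have h1le : (1:ℝ) ≤ ((n:ℝ)+3)/2 := by
    have : (0:ℝ) ≤ n := Nat.cast_nonneg n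
    linarith
  have hu := hinner.rpow_const (p := ((n:ℝ)+3)/2) (Or.inr h1le)
  have hv : HasDerivAt (fun s : ℝ => (R^2 + t^2 + 2*R*t*s)^(n+3))
      (((n:ℝ)+3) * (R^2 + t^2 + 2*R*t*s0)^(n+2) * (2*R*t)) s0 := by
    have := (hasDerivAt_qs R t 0 s0).pow (n+3)
    push_cast [Nat.add_sub_cancel] at this
    exact this
  have hne : (R^2 + t^2 + 2*R*t*s0)^(n+3) ≠ 0 := by positivity
  have h := hu.div hv hne
  refine h.congr_deriv ?_
  symm
  have h1 : (1-s0^2) ^ (((n:ℝ)+3)/2 - 1) = (1-s0^2) ^ (((n:ℝ)+1)/2) := by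
    rw [show ((n:ℝ)+3)/2 - 1 = ((n:ℝ)+1)/2 by ring]
  have hbase : (0:ℝ) ≤ 1 - s0^2 := by nlinarith [hs.1, hs.2]
  have h2 : (1-s0^2) ^ (((n:ℝ)+3)/2) = (1-s0^2) * (1-s0^2) ^ (((n:ℝ)+1)/2) := by
    have : ((n:ℝ)+3)/2 = ((n:ℝ)+1)/2 + 1 := by ring
    rw [this, rpow_split _ _ hbase (by positivity)]
  rw [h1, h2]
  have hqne : (R^2 + t^2 + 2*R*t*s0) ≠ 0 := hq.ne'
  rw [div_add_div _ _ (by positivity) (by positivity), div_eq_div_iff (by positivity) (by positivity)]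
  ring

private lemma cont_rpow_w (e : ℝ) (he : 0 ≤ e) :
    Continuous (fun s : ℝ => (1-s^2) ^ e) :=
  (continuous_const.sub (continuous_pow 2)).rpow_const (fun _ => Or.inr he)

private lemma qpos (R : ℝ) (hR : 0 < R) {t s : ℝ} (ht : 0 ≤ t) (htR : t < R)
    (hs1 : -1 ≤ s) (hs2 : s ≤ 1) : 0 < R^2+t^2+2*R*t*s := by
  have h1 : 0 < (R-t)^2 := pow_pos (by linarith) 2
  nlinarith [mul_nonneg (mul_nonneg (by linarith : (0:ℝ) ≤ 2*R) ht) (by linarith : 0 ≤ 1+s)]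

private lemma contOn_frac (R X : ℝ) (hR : 0 < R) (hXR : X < R)
    {g : ℝ × ℝ → ℝ} (hg : Continuous g) (N : ℕ) :
    ContinuousOn (fun p : ℝ×ℝ => g p / (R^2+p.1^2+2*R*p.1*p.2)^N)
      (Icc 0 X ×ˢ Icc (-1) 1) := by
  apply ContinuousOn.div hg.continuousOn
  · exact (Continuous.continuousOn (by fun_prop) :
      ContinuousOn (fun p : ℝ×ℝ => (R^2+p.1^2+2*R*p.1*p.2)^N) _)
  · rintro ⟨t, s⟩ hp
    rw [Set.mem_prod] at hp
    exact pow_ne_zero _ (qpos R hR hp.1.1 (lt_of_le_of_lt hp.1.2 hXR) hp.2.1 hp.2.2).ne'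

-- continuity in s for fixed t
private lemma contOn_frac_s (R t : ℝ) (hR : 0 < R) (ht : 0 ≤ t) (htR : t < R)
    {g : ℝ → ℝ} (hg : Continuous g) (N : ℕ) :
    ContinuousOn (fun s : ℝ => g s / (R^2+t^2+2*R*t*s)^N) (Set.uIcc (-1:ℝ) 1) := by
  rw [Set.uIcc_of_le (by norm_num)]
  apply ContinuousOn.div hg.continuousOn
  · exact (Continuous.continuousOn (by fun_prop) :
      ContinuousOn (fun s : ℝ => (R^2+t^2+2*R*t*s)^N) _)
  · intro s hs
    exact pow_ne_zero _ (qpos R hR ht htR hs.1 hs.2).ne'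

private lemma contOn_frac_t (R s X : ℝ) (hR : 0 < R) (hX0 : 0 ≤ X) (hXR : X < R)
    (hs1 : -1 ≤ s) (hs2 : s ≤ 1) {g : ℝ → ℝ} (hg : Continuous g) (N : ℕ) :
    ContinuousOn (fun τ : ℝ => g τ / (R^2+τ^2+2*R*τ*s)^N) (Set.uIcc (0:ℝ) X) := by
  rw [Set.uIcc_of_le hX0]
  apply ContinuousOn.div hg.continuousOn
  · exact (Continuous.continuousOn (by fun_prop) :
      ContinuousOn (fun τ : ℝ => (R^2+τ^2+2*R*τ*s)^N) _)
  · intro τ hτ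
    exact pow_ne_zero _ (qpos R hR hτ.1 (lt_of_le_of_lt hτ.2 hXR) hs1 hs2).ne'

private lemma rec_step (γ : ℝ) (hγ : 1 ≤ γ) :
    (1+2*γ) * ∫ s in (-1:ℝ)..1, (1-s^2)^γ
      = 2*γ * ∫ s in (-1:ℝ)..1, (1-s^2)^(γ-1) := by
  have hγ0 : 0 < γ := by linarith
  have hderiv : ∀ s ∈ Set.uIcc (-1:ℝ) 1,
      HasDerivAt (fun s : ℝ => s * (1-s^2)^γ)
        ((1+2*γ)*(1-s^2)^γ - 2*γ*(1-s^2)^(γ-1)) s := by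
    intro s hs
    rw [Set.uIcc_of_le (by norm_num)] at hs
    have hbase : (0:ℝ) ≤ 1 - s^2 := by
      have h1 := hs.1; have h2 := hs.2; nlinarith
    have hinner : HasDerivAt (fun s : ℝ => 1 - s^2) (-(2*s)) s := by
      simpa using (hasDerivAt_pow 2 s).const_sub 1
    have hu := hinner.rpow_const (p := γ) (Or.inr hγ)
    have h := (hasDerivAt_id s).mul hu
    refine h.congr_deriv ?_
    symm
    have hsplit : (1-s^2) ^ γ = (1-s^2) * (1-s^2) ^ (γ-1) := by
      rcases eq_or_lt_of_le hγ with h1 | h1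
      · rw [← h1]; norm_num
      · rw [show γ = (γ-1) + 1 by ring, rpow_split _ _ hbase (by linarith)]
        rw [show γ - 1 + 1 - 1 = γ - 1 by ring]
    rw [hsplit]
    simp only [id_eq]
    ring
  have hint : IntervalIntegrable
      (fun s : ℝ => (1+2*γ)*(1-s^2)^γ - 2*γ*(1-s^2)^(γ-1)) MeasureTheory.volume (-1) 1 := by
    apply Continuous.intervalIntegrable
    exact (continuous_const.mul (cont_rpow_w γ hγ0.le)).sub
      (continuous_const.mul (cont_rpow_w (γ-1) (by linarith)))
  have hftc := integral_eq_sub_of_hasDerivAt hderiv hint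
  have hz : (1:ℝ) * (1-(1:ℝ)^2)^γ - (-1) * (1-(-1:ℝ)^2)^γ = 0 := by
    norm_num [Real.zero_rpow hγ0.ne']
  rw [intervalIntegral.integral_sub (f := fun s => (1+2*γ)*(1-s^2)^γ) (g := fun s => 2*γ*(1-s^2)^(γ-1)) ((continuous_const.mul (cont_rpow_w γ hγ0.le)).intervalIntegrable _ _)
        ((continuous_const.mul (cont_rpow_w (γ-1) (by linarith))).intervalIntegrable _ _),
      intervalIntegral.integral_const_mul, intervalIntegral.integral_const_mul] at hftc
  linarith [hftc, hz.symm ▸ hftc]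

private lemma W_val : ∀ k : ℕ, 2 ≤ k →
    (∫ s in (-1:ℝ)..1, (1-s^2)^((2*(k:ℝ)-3)/2))
      = Real.sqrt π * Real.Gamma ((k:ℝ)-1/2) / Real.Gamma k := by
  intro k hk
  induction k, hk using Nat.le_induction with
  | base =>
    have he : ((2*((2:ℕ):ℝ)-3)/2) = (1/2 : ℝ) := by norm_num
    rw [he]
    have : (∫ s in (-1:ℝ)..1, (1-s^2)^((1:ℝ)/2)) = ∫ s in (-1:ℝ)..1, Real.sqrt (1-s^2) := by
      apply intervalIntegral.integral_congr
      intro s _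
      simp only []
      rw [Real.sqrt_eq_rpow]
    rw [this, integral_sqrt_one_sub_sq]
    have hg32 : Real.Gamma (((2:ℕ):ℝ) - 1/2) = Real.sqrt π / 2 := by
      have : ((2:ℕ):ℝ) - 1/2 = 1/2 + 1 := by norm_num
      rw [this, Real.Gamma_add_one (by norm_num), Real.Gamma_one_half_eq]
      ring
    have hg2 : Real.Gamma ((2:ℕ):ℝ) = 1 := by
      norm_num [Real.Gamma_two]
    rw [hg32, hg2]
    rw [div_one]
    rw [show Real.sqrt π * (Real.sqrt π / 2) = (Real.sqrt π * Real.sqrt π)/2 by ring,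
        Real.mul_self_sqrt pi_pos.le]
  | succ k hk ih =>
    have hk2 : (2:ℝ) ≤ (k:ℝ) := by exact_mod_cast hk
    set γ : ℝ := (2*((k:ℕ):ℝ)-1)/2 with hγdef
    have hγ : 1 ≤ γ := by rw [hγdef]; linarith
    have hrec := rec_step γ hγ
    have he1 : (2*(((k+1:ℕ)):ℝ)-3)/2 = γ := by push_cast; rw [hγdef]; ring
    have he2 : γ - 1 = (2*((k:ℕ):ℝ)-3)/2 := by rw [hγdef]; ring
    rw [he1]
    rw [he2] at hrec
    rw [ih] at hrec
    have h12γ : (0:ℝ) < 1 + 2*γ := by linarith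
    have hint : (∫ s in (-1:ℝ)..1, (1-s^2)^γ)
        = 2*γ/(1+2*γ) * (Real.sqrt π * Real.Gamma ((k:ℝ)-1/2) / Real.Gamma k) := by
      field_simp at hrec ⊢
      linarith
    rw [hint]
    have hGk : Real.Gamma ((k:ℝ)) ≠ 0 := (Real.Gamma_pos_of_pos (by linarith)).ne'
    have hGsucc : Real.Gamma (((k+1:ℕ)):ℝ) = (k:ℝ) * Real.Gamma (k:ℝ) := by
      push_cast
      rw [Real.Gamma_add_one (by linarith)]
    have hGshalf : Real.Gamma ((((k+1:ℕ)):ℝ) - 1/2) = ((k:ℝ)-1/2) * Real.Gamma ((k:ℝ)-1/2) := by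
      push_cast
      rw [show (k:ℝ) + 1 - 1/2 = ((k:ℝ) - 1/2) + 1 by ring,
        Real.Gamma_add_one (by linarith)]
    rw [hGsucc, hGshalf]
    have : 2*γ/(1+2*γ) = ((k:ℝ)-1/2)/(k:ℝ) := by
      rw [hγdef]
      field_simp
      ring
    rw [this]
    field_simp

private lemma key (n : ℕ) (R x : ℝ) (hR : 0 < R) (hx0 : 0 < x) (hxR : x < R) :
    (∫ s in (-1:ℝ)..1, (1-s^2)^(((n:ℝ)+1)/2)) / R^(2*n+4)
      < ∫ s in (-1:ℝ)..1, (1-s^2)^(((n:ℝ)+1)/2) / (R^2+x^2+2*R*x*s)^(n+2) := by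
  have hβ : (0:ℝ) ≤ ((n:ℝ)+1)/2 := by positivity
  have hwc : Continuous (fun s : ℝ => (1-s^2)^(((n:ℝ)+1)/2)) := cont_rpow_w _ hβ
  -- positivity of the auxiliary integrals
  have hP : ∀ τ : ℝ, 0 ≤ τ → τ < R → ∀ N : ℕ,
      0 < ∫ s in (-1:ℝ)..1, (1-s^2)^(((n:ℝ)+1)/2) / (R^2+τ^2+2*R*τ*s)^N := by
    intro τ h0 hτR N
    apply intervalIntegral_pos_of_pos_on
    · exact (contOn_frac_s R τ hR h0 hτR hwc N).intervalIntegrable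
    · intro s hs
      have hb : 0 < 1 - s^2 := by nlinarith [hs.1, hs.2]
      have hq := qpos R hR h0 hτR (by linarith [hs.1]) (by linarith [hs.2])
      exact div_pos (Real.rpow_pos_of_pos hb _) (pow_pos hq N)
    · norm_num
  -- ∫ SV = 0
  have hSV0 : ∀ τ : ℝ, 0 ≤ τ → τ < R →
      (∫ s in (-1:ℝ)..1,
        ((-((n:ℝ)+3)) * s * (1-s^2)^(((n:ℝ)+1)/2) / (R^2+τ^2+2*R*τ*s)^(n+3)
          + (1-s^2) * (1-s^2)^(((n:ℝ)+1)/2) * (-2*((n:ℝ)+3)*R*τ) / (R^2+τ^2+2*R*τ*s)^(n+4))) = 0 := by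
    intro τ h0 hτR
    have hd : ∀ s ∈ Set.uIcc (-1:ℝ) 1,
        HasDerivAt (fun s : ℝ => (1-s^2) ^ (((n:ℝ)+3)/2) / (R^2+τ^2+2*R*τ*s)^(n+3))
          ((-((n:ℝ)+3)) * s * (1-s^2)^(((n:ℝ)+1)/2) / (R^2+τ^2+2*R*τ*s)^(n+3)
            + (1-s^2) * (1-s^2)^(((n:ℝ)+1)/2) * (-2*((n:ℝ)+3)*R*τ) / (R^2+τ^2+2*R*τ*s)^(n+4)) s := by
      intro s hs
      rw [Set.uIcc_of_le (by norm_num)] at hs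
      exact hasDerivAt_V n R τ s hs (qpos R hR h0 hτR hs.1 hs.2)
    have hint : IntervalIntegrable
        (fun s : ℝ =>
          (-((n:ℝ)+3)) * s * (1-s^2)^(((n:ℝ)+1)/2) / (R^2+τ^2+2*R*τ*s)^(n+3)
          + (1-s^2) * (1-s^2)^(((n:ℝ)+1)/2) * (-2*((n:ℝ)+3)*R*τ) / (R^2+τ^2+2*R*τ*s)^(n+4))
        MeasureTheory.volume (-1) 1 := by
      apply ContinuousOn.intervalIntegrable
      exact (contOn_frac_s R τ hR h0 hτR
          (((continuous_const.mul continuous_id).mul hwc)) (n+3)).add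
        (contOn_frac_s R τ hR h0 hτR
          (((continuous_const.sub (continuous_pow 2)).mul hwc).mul continuous_const) (n+4))
    rw [integral_eq_sub_of_hasDerivAt hd hint]
    have hz : ((n:ℝ)+3)/2 ≠ 0 := by positivity
    norm_num [Real.zero_rpow hz]
  -- Step B: positivity of Φ t
  have hPhiPos : ∀ t, 0 < t → t < x →
      0 < ∫ s in (-1:ℝ)..1,
        (1-s^2)^(((n:ℝ)+1)/2) * (-((n:ℝ)+2) * (2*t + 2*R*s)) / (R^2+t^2+2*R*t*s)^(n+3) := by
    intro t ht0 htx
    have htR : t < R := htx.trans hxR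
    have hB1 : ∀ s ∈ Set.uIcc (-1:ℝ) 1,
        t^(n+3) * ((1-s^2)^(((n:ℝ)+1)/2) * (-((n:ℝ)+2) * (2*t + 2*R*s)) / (R^2+t^2+2*R*t*s)^(n+3))
          = ∫ τ in (0:ℝ)..t,
              (2*((n:ℝ)+2)^2 * τ^(n+3) * (1-s^2)^(((n:ℝ)+1)/2) / (R^2+τ^2+2*R*τ*s)^(n+3)
                + 2*((n:ℝ)+2)*R*τ^(n+2) *
                  ((-((n:ℝ)+3)) * s * (1-s^2)^(((n:ℝ)+1)/2) / (R^2+τ^2+2*R*τ*s)^(n+3)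
                    + (1-s^2) * (1-s^2)^(((n:ℝ)+1)/2) * (-2*((n:ℝ)+3)*R*τ) / (R^2+τ^2+2*R*τ*s)^(n+4))) := by
      intro s hs
      rw [Set.uIcc_of_le (by norm_num)] at hs
      have hd : ∀ τ ∈ Set.uIcc (0:ℝ) t,
          HasDerivAt (fun τ : ℝ => τ^(n+3) *
              ((1-s^2)^(((n:ℝ)+1)/2) * (-((n:ℝ)+2) * (2*τ + 2*R*s)) / (R^2+τ^2+2*R*τ*s)^(n+3)))
            (2*((n:ℝ)+2)^2 * τ^(n+3) * (1-s^2)^(((n:ℝ)+1)/2) / (R^2+τ^2+2*R*τ*s)^(n+3)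
              + 2*((n:ℝ)+2)*R*τ^(n+2) *
                ((-((n:ℝ)+3)) * s * (1-s^2)^(((n:ℝ)+1)/2) / (R^2+τ^2+2*R*τ*s)^(n+3)
                  + (1-s^2) * (1-s^2)^(((n:ℝ)+1)/2) * (-2*((n:ℝ)+3)*R*τ) / (R^2+τ^2+2*R*τ*s)^(n+4))) τ := by
        intro τ hτ
        rw [Set.uIcc_of_le ht0.le] at hτ
        exact hasDerivAt_cert n R s τ _ (qpos R hR hτ.1 (lt_of_le_of_lt hτ.2 htR) hs.1 hs.2)
      have hint : IntervalIntegrable (fun τ : ℝ =>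
          2*((n:ℝ)+2)^2 * τ^(n+3) * (1-s^2)^(((n:ℝ)+1)/2) / (R^2+τ^2+2*R*τ*s)^(n+3)
            + 2*((n:ℝ)+2)*R*τ^(n+2) *
              ((-((n:ℝ)+3)) * s * (1-s^2)^(((n:ℝ)+1)/2) / (R^2+τ^2+2*R*τ*s)^(n+3)
                + (1-s^2) * (1-s^2)^(((n:ℝ)+1)/2) * (-2*((n:ℝ)+3)*R*τ) / (R^2+τ^2+2*R*τ*s)^(n+4)))
          MeasureTheory.volume 0 t := by
        apply ContinuousOn.intervalIntegrable
        apply ContinuousOn.add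
        · exact contOn_frac_t R s t hR ht0.le htR hs.1 hs.2 (by fun_prop) (n+3)
        · apply ContinuousOn.mul (Continuous.continuousOn (by fun_prop))
          apply ContinuousOn.add
          · exact contOn_frac_t R s t hR ht0.le htR hs.1 hs.2 (by fun_prop) (n+3)
          · exact contOn_frac_t R s t hR ht0.le htR hs.1 hs.2 (by fun_prop) (n+4)
      rw [integral_eq_sub_of_hasDerivAt hd hint]
      norm_num
    have hcontD : ContinuousOn (fun p : ℝ × ℝ =>
        2*((n:ℝ)+2)^2 * p.1^(n+3) * (1-p.2^2)^(((n:ℝ)+1)/2) / (R^2+p.1^2+2*R*p.1*p.2)^(n+3)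
          + 2*((n:ℝ)+2)*R*p.1^(n+2) *
            ((-((n:ℝ)+3)) * p.2 * (1-p.2^2)^(((n:ℝ)+1)/2) / (R^2+p.1^2+2*R*p.1*p.2)^(n+3)
              + (1-p.2^2) * (1-p.2^2)^(((n:ℝ)+1)/2) * (-2*((n:ℝ)+3)*R*p.1) / (R^2+p.1^2+2*R*p.1*p.2)^(n+4)))
        (Icc 0 t ×ˢ Icc (-1) 1) := by
      apply ContinuousOn.add
      · exact contOn_frac R t hR htR
          ((Continuous.mul (by fun_prop) (hwc.comp continuous_snd))) (n+3)
      · apply ContinuousOn.mul (Continuous.continuousOn (by fun_prop))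
        apply ContinuousOn.add
        · exact contOn_frac R t hR htR
            ((Continuous.mul (by fun_prop) (hwc.comp continuous_snd))) (n+3)
        · exact contOn_frac R t hR htR
            (Continuous.mul (Continuous.mul (by fun_prop) (hwc.comp continuous_snd)) (by fun_prop)) (n+4)
    have hB3 : ∀ τ ∈ Set.Ioo (0:ℝ) t,
        0 < ∫ s in (-1:ℝ)..1,
            (2*((n:ℝ)+2)^2 * τ^(n+3) * (1-s^2)^(((n:ℝ)+1)/2) / (R^2+τ^2+2*R*τ*s)^(n+3)
              + 2*((n:ℝ)+2)*R*τ^(n+2) *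
                ((-((n:ℝ)+3)) * s * (1-s^2)^(((n:ℝ)+1)/2) / (R^2+τ^2+2*R*τ*s)^(n+3)
                  + (1-s^2) * (1-s^2)^(((n:ℝ)+1)/2) * (-2*((n:ℝ)+3)*R*τ) / (R^2+τ^2+2*R*τ*s)^(n+4))) := by
      intro τ hτ
      have hτR : τ < R := lt_trans hτ.2 htR
      have hI1 : IntervalIntegrable
          (fun s : ℝ => (1-s^2)^(((n:ℝ)+1)/2) / (R^2+τ^2+2*R*τ*s)^(n+3)) MeasureTheory.volume (-1) 1 :=
        (contOn_frac_s R τ hR hτ.1.le hτR hwc (n+3)).intervalIntegrable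
      have hI2 : IntervalIntegrable
          (fun s : ℝ => (-((n:ℝ)+3)) * s * (1-s^2)^(((n:ℝ)+1)/2) / (R^2+τ^2+2*R*τ*s)^(n+3)
            + (1-s^2) * (1-s^2)^(((n:ℝ)+1)/2) * (-2*((n:ℝ)+3)*R*τ) / (R^2+τ^2+2*R*τ*s)^(n+4))
          MeasureTheory.volume (-1) 1 := by
        apply ContinuousOn.intervalIntegrable
        exact (contOn_frac_s R τ hR hτ.1.le hτR
            ((continuous_const.mul continuous_id).mul hwc) (n+3)).add
          (contOn_frac_s R τ hR hτ.1.le hτR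
            (((continuous_const.sub (continuous_pow 2)).mul hwc).mul continuous_const) (n+4))
      have he : (fun s : ℝ =>
          2*((n:ℝ)+2)^2 * τ^(n+3) * (1-s^2)^(((n:ℝ)+1)/2) / (R^2+τ^2+2*R*τ*s)^(n+3)
            + 2*((n:ℝ)+2)*R*τ^(n+2) *
              ((-((n:ℝ)+3)) * s * (1-s^2)^(((n:ℝ)+1)/2) / (R^2+τ^2+2*R*τ*s)^(n+3)
                + (1-s^2) * (1-s^2)^(((n:ℝ)+1)/2) * (-2*((n:ℝ)+3)*R*τ) / (R^2+τ^2+2*R*τ*s)^(n+4)))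
          = fun s : ℝ =>
            (2*((n:ℝ)+2)^2 * τ^(n+3)) * ((1-s^2)^(((n:ℝ)+1)/2) / (R^2+τ^2+2*R*τ*s)^(n+3))
            + (2*((n:ℝ)+2)*R*τ^(n+2)) *
              ((-((n:ℝ)+3)) * s * (1-s^2)^(((n:ℝ)+1)/2) / (R^2+τ^2+2*R*τ*s)^(n+3)
                + (1-s^2) * (1-s^2)^(((n:ℝ)+1)/2) * (-2*((n:ℝ)+3)*R*τ) / (R^2+τ^2+2*R*τ*s)^(n+4)) := by
        funext s; ring
      rw [he, intervalIntegral.integral_add (hI1.const_mul _) (hI2.const_mul _),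
        intervalIntegral.integral_const_mul, intervalIntegral.integral_const_mul,
        hSV0 τ hτ.1.le hτR, mul_zero, add_zero]
      exact mul_pos (mul_pos (by positivity) (pow_pos hτ.1 (n+3))) (hP τ hτ.1.le hτR (n+3))
    have hswap := my_swap (f := fun τ s =>
        2*((n:ℝ)+2)^2 * τ^(n+3) * (1-s^2)^(((n:ℝ)+1)/2) / (R^2+τ^2+2*R*τ*s)^(n+3)
          + 2*((n:ℝ)+2)*R*τ^(n+2) *
            ((-((n:ℝ)+3)) * s * (1-s^2)^(((n:ℝ)+1)/2) / (R^2+τ^2+2*R*τ*s)^(n+3)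
              + (1-s^2) * (1-s^2)^(((n:ℝ)+1)/2) * (-2*((n:ℝ)+3)*R*τ) / (R^2+τ^2+2*R*τ*s)^(n+4)))
      ht0.le (by norm_num : (-1:ℝ) ≤ 1) hcontD
    have hinner := my_inner_integrable (f := fun τ s =>
        2*((n:ℝ)+2)^2 * τ^(n+3) * (1-s^2)^(((n:ℝ)+1)/2) / (R^2+τ^2+2*R*τ*s)^(n+3)
          + 2*((n:ℝ)+2)*R*τ^(n+2) *
            ((-((n:ℝ)+3)) * s * (1-s^2)^(((n:ℝ)+1)/2) / (R^2+τ^2+2*R*τ*s)^(n+3)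
              + (1-s^2) * (1-s^2)^(((n:ℝ)+1)/2) * (-2*((n:ℝ)+3)*R*τ) / (R^2+τ^2+2*R*τ*s)^(n+4)))
      ht0.le (by norm_num : (-1:ℝ) ≤ 1) hcontD
    have hpos2 : 0 < ∫ τ in (0:ℝ)..t, (∫ s in (-1:ℝ)..1,
        (2*((n:ℝ)+2)^2 * τ^(n+3) * (1-s^2)^(((n:ℝ)+1)/2) / (R^2+τ^2+2*R*τ*s)^(n+3)
          + 2*((n:ℝ)+2)*R*τ^(n+2) *
            ((-((n:ℝ)+3)) * s * (1-s^2)^(((n:ℝ)+1)/2) / (R^2+τ^2+2*R*τ*s)^(n+3)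
              + (1-s^2) * (1-s^2)^(((n:ℝ)+1)/2) * (-2*((n:ℝ)+3)*R*τ) / (R^2+τ^2+2*R*τ*s)^(n+4)))) :=
      intervalIntegral_pos_of_pos_on hinner hB3 ht0
    have hmul : t^(n+3) * ∫ s in (-1:ℝ)..1,
        (1-s^2)^(((n:ℝ)+1)/2) * (-((n:ℝ)+2) * (2*t + 2*R*s)) / (R^2+t^2+2*R*t*s)^(n+3)
        = ∫ s in (-1:ℝ)..1, t^(n+3) *
          ((1-s^2)^(((n:ℝ)+1)/2) * (-((n:ℝ)+2) * (2*t + 2*R*s)) / (R^2+t^2+2*R*t*s)^(n+3)) :=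
      (intervalIntegral.integral_const_mul _ _).symm
    have hkey : 0 < t^(n+3) * ∫ s in (-1:ℝ)..1,
        (1-s^2)^(((n:ℝ)+1)/2) * (-((n:ℝ)+2) * (2*t + 2*R*s)) / (R^2+t^2+2*R*t*s)^(n+3) := by
      rw [hmul, intervalIntegral.integral_congr hB1, ← hswap]
      exact hpos2
    nlinarith [hkey, pow_pos ht0 (n+3)]
  -- Step A
  have hcontψ : ContinuousOn (fun p : ℝ × ℝ =>
      (1-p.2^2)^(((n:ℝ)+1)/2) * (-((n:ℝ)+2) * (2*p.1 + 2*R*p.2)) / (R^2+p.1^2+2*R*p.1*p.2)^(n+3))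
      (Icc 0 x ×ˢ Icc (-1) 1) :=
    contOn_frac R x hR hxR ((hwc.comp continuous_snd).mul (by fun_prop)) (n+3)
  have hA : ∀ s ∈ Set.uIcc (-1:ℝ) 1,
      (1-s^2)^(((n:ℝ)+1)/2) / (R^2+x^2+2*R*x*s)^(n+2)
        - (1-s^2)^(((n:ℝ)+1)/2) / (R^2+0^2+2*R*0*s)^(n+2)
      = ∫ t in (0:ℝ)..x,
          (1-s^2)^(((n:ℝ)+1)/2) * (-((n:ℝ)+2) * (2*t + 2*R*s)) / (R^2+t^2+2*R*t*s)^(n+3) := by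
    intro s hs
    rw [Set.uIcc_of_le (by norm_num : (-1:ℝ) ≤ 1)] at hs
    have hd : ∀ t ∈ Set.uIcc (0:ℝ) x,
        HasDerivAt (fun t : ℝ => (1-s^2)^(((n:ℝ)+1)/2) / (R^2+t^2+2*R*t*s)^(n+2))
          ((1-s^2)^(((n:ℝ)+1)/2) * (-((n:ℝ)+2) * (2*t + 2*R*s)) / (R^2+t^2+2*R*t*s)^(n+3)) t := by
      intro t ht
      rw [Set.uIcc_of_le hx0.le] at ht
      exact hasDerivAt_psi n R s t _ (qpos R hR ht.1 (lt_of_le_of_lt ht.2 hxR) hs.1 hs.2)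
    have hint : IntervalIntegrable (fun t : ℝ =>
        (1-s^2)^(((n:ℝ)+1)/2) * (-((n:ℝ)+2) * (2*t + 2*R*s)) / (R^2+t^2+2*R*t*s)^(n+3))
        MeasureTheory.volume 0 x :=
      (contOn_frac_t R s x hR hx0.le hxR hs.1 hs.2 (by fun_prop) (n+3)).intervalIntegrable
    rw [integral_eq_sub_of_hasDerivAt hd hint]
  have hI1 : IntervalIntegrable
      (fun s : ℝ => (1-s^2)^(((n:ℝ)+1)/2) / (R^2+x^2+2*R*x*s)^(n+2)) MeasureTheory.volume (-1) 1 :=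
    (contOn_frac_s R x hR hx0.le hxR hwc (n+2)).intervalIntegrable
  have hI2 : IntervalIntegrable
      (fun s : ℝ => (1-s^2)^(((n:ℝ)+1)/2) / (R^2+0^2+2*R*0*s)^(n+2)) MeasureTheory.volume (-1) 1 :=
    (contOn_frac_s R 0 hR le_rfl hR hwc (n+2)).intervalIntegrable
  have stepA : (∫ s in (-1:ℝ)..1, (1-s^2)^(((n:ℝ)+1)/2) / (R^2+x^2+2*R*x*s)^(n+2))
      - (∫ s in (-1:ℝ)..1, (1-s^2)^(((n:ℝ)+1)/2) / (R^2+0^2+2*R*0*s)^(n+2))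
      = ∫ t in (0:ℝ)..x, ∫ s in (-1:ℝ)..1,
          (1-s^2)^(((n:ℝ)+1)/2) * (-((n:ℝ)+2) * (2*t + 2*R*s)) / (R^2+t^2+2*R*t*s)^(n+3) := by
    rw [← intervalIntegral.integral_sub hI1 hI2, intervalIntegral.integral_congr hA]
    exact (my_swap hx0.le (by norm_num : (-1:ℝ) ≤ 1) hcontψ).symm
  have heval : (∫ s in (-1:ℝ)..1, (1-s^2)^(((n:ℝ)+1)/2) / (R^2+0^2+2*R*0*s)^(n+2))
      = (∫ s in (-1:ℝ)..1, (1-s^2)^(((n:ℝ)+1)/2)) / R^(2*n+4) := by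
    have he : (fun s : ℝ => (1-s^2)^(((n:ℝ)+1)/2) / (R^2+0^2+2*R*0*s)^(n+2))
        = fun s : ℝ => (1-s^2)^(((n:ℝ)+1)/2) / R^(2*n+4) := by
      funext s
      rw [show R^2+0^2+2*R*0*s = R^2 by ring, ← pow_mul, show 2*(n+2) = 2*n+4 by ring]
    rw [he, intervalIntegral.integral_div]
  have hPhiInt : IntervalIntegrable (fun t => ∫ s in (-1:ℝ)..1,
      (1-s^2)^(((n:ℝ)+1)/2) * (-((n:ℝ)+2) * (2*t + 2*R*s)) / (R^2+t^2+2*R*t*s)^(n+3))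
      MeasureTheory.volume 0 x :=
    my_inner_integrable hx0.le (by norm_num : (-1:ℝ) ≤ 1) hcontψ
  have hfinal : 0 < ∫ t in (0:ℝ)..x, ∫ s in (-1:ℝ)..1,
      (1-s^2)^(((n:ℝ)+1)/2) * (-((n:ℝ)+2) * (2*t + 2*R*s)) / (R^2+t^2+2*R*t*s)^(n+3) :=
    intervalIntegral_pos_of_pos_on hPhiInt (fun t ht => hPhiPos t ht.1 ht.2) hx0
  linarith [stepA, heval ▸ stepA]

theorem stmt_2 (k : ℕ) (hk : 2 ≤ k) (R x : ℝ) (hR : 0 < R) (hx : 0 ≤ x) (hxR : x < R) :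
    (∫ s in (-1:ℝ)..1, (1 - s^2) ^ ((2*(k:ℝ) - 3)/2) / (R^2 + x^2 + 2*R*x*s) ^ (2*(k - 1))) ≥
      Real.sqrt π * Real.Gamma ((k:ℝ) - 1/2) / Real.Gamma k / R ^ (4*k - 4) ∧
    ((∫ s in (-1:ℝ)..1, (1 - s^2) ^ ((2*(k:ℝ) - 3)/2) / (R^2 + x^2 + 2*R*x*s) ^ (2*(k - 1))) =
      Real.sqrt π * Real.Gamma ((k:ℝ) - 1/2) / Real.Gamma k / R ^ (4*k - 4) ↔ x = 0) := by
  have hW := W_val k hk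
  rcases eq_or_lt_of_le hx with hx0 | hx0
  · subst hx0
    have heq : (∫ s in (-1:ℝ)..1, (1 - s^2) ^ ((2*(k:ℝ) - 3)/2) / (R^2 + 0^2 + 2*R*0*s) ^ (2*(k - 1)))
        = Real.sqrt π * Real.Gamma ((k:ℝ) - 1/2) / Real.Gamma k / R ^ (4*k - 4) := by
      have he : (fun s : ℝ => (1 - s^2) ^ ((2*(k:ℝ) - 3)/2) / (R^2 + 0^2 + 2*R*0*s) ^ (2*(k - 1)))
          = fun s : ℝ => (1 - s^2) ^ ((2*(k:ℝ) - 3)/2) / R^(4*k-4) := by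
        funext s
        rw [show R^2+0^2+2*R*0*s = R^2 by ring, ← pow_mul, show 2*(2*(k-1)) = 4*k-4 by omega]
      rw [he, intervalIntegral.integral_div, hW]
    exact ⟨ge_of_eq heq, ⟨fun _ => rfl, fun _ => heq⟩⟩
  · have hcast : (((2*k-4 : ℕ)):ℝ) = 2*(k:ℝ)-4 := by
      have h4 : (4:ℕ) ≤ 2*k := by omega
      push_cast [Nat.cast_sub h4]
      ring
    have h := key (2*k-4) R x hR hx0 hxR
    rw [hcast] at h
    rw [show (2*(k:ℝ)-4+1)/2 = (2*(k:ℝ)-3)/2 by ring] at h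
    rw [show (2*k-4)+2 = 2*(k-1) by omega, show 2*(2*k-4)+4 = 4*k-4 by omega, hW] at h
    constructor
    · exact le_of_lt h
    · constructor
      · intro heq
        exfalso
        rw [heq] at h
        exact lt_irrefl _ h
      · intro hx0'
        rw [hx0'] at hx0
        exact absurd hx0 (lt_irrefl 0)
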